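/- Let H be a complex Hilbert space, P0 an orthogonal projection on H, and f0 a unit vector with P0 f0 = f0; write P0⊥ = 1 − P0. Define E on B_h(H) × H by E(X,h) = ( P0⊥ X P0 + P0 X P0⊥ , i·Im⟨h,f0⟩ f0 + (P0 − f0⊗f0) h + P0⊥ X f0 ). Then E is a continuous real-linear map satisfying E∘E = E, and the range of E equals the set {(X P0 − P0 X, X f0) : X ∈ B(H), X* = −X}; moreover E fixes every element of this set. -/

import Mathlib

open scoped InnerProductSpace
open ContinuousLinearMap

/-- The rank-one operator `x ⊗ y`, with `(x ⊗ y) z = ⟨z, y⟩ x` (inner product linear in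
the first variable); in Mathlib's convention this is `z ↦ ⟪y, z⟫ • x`. -/
noncomputable def rankOne {H : Type*} [NormedAddCommGroup H] [InnerProductSpace ℂ H]
    (x y : H) : H →L[ℂ] H :=
  (innerSL ℂ y).smulRight x

/-- The map `E(X,h) = (P0⊥ X P0 + P0 X P0⊥ ,
i·Im⟨h,f0⟩ f0 + (P0 − f0⊗f0) h + P0⊥ X f0)`, where `P0⊥ = 1 − P0` and the inner product
`⟨h, f0⟩` is linear in the first variable (so `⟨h,f0⟩ = ⟪f0, h⟫` in Mathlib's convention). -/
noncomputable def Eproj {H : Type*} [NormedAddCommGroup H] [InnerProductSpace ℂ H]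
    [CompleteSpace H] (P0 : H →L[ℂ] H) (f0 : H) :
    (H →L[ℂ] H) × H → (H →L[ℂ] H) × H :=
  fun Xh =>
    ((1 - P0) * Xh.1 * P0 + P0 * Xh.1 * (1 - P0),
      (Complex.I * ((⟪f0, Xh.2⟫_ℂ : ℂ).im : ℂ)) • f0 + (P0 - rankOne f0 f0) Xh.2
        + (1 - P0) (Xh.1 f0))

lemma rankOne_apply' {H : Type*} [NormedAddCommGroup H] [InnerProductSpace ℂ H]
    (x y z : H) : rankOne x y z = ⟪y, z⟫_ℂ • x := rfl

lemma adjoint_rankOne' {H : Type*} [NormedAddCommGroup H] [InnerProductSpace ℂ H]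
    [CompleteSpace H] (x y : H) : adjoint (rankOne x y) = rankOne y x := by
  symm
  rw [eq_adjoint_iff]
  intro u v
  rw [rankOne_apply', rankOne_apply', inner_smul_left, inner_smul_right,
    ← inner_conj_symm x u, Complex.conj_conj]
  ring

set_option synthInstance.maxHeartbeats 1000000 in
set_option maxHeartbeats 2000000 in
/-- `E` is a continuous real-linear map on `B_h(H) × H` with `E ∘ E = E`,
whose range is the tangent space `{(X P0 − P0 X, X f0) : X* = −X}`; moreover `E` fixes
every element of this set. -/
theorem Eproj_is_projection_onto_tangent
    {H : Type*} [NormedAddCommGroup H] [InnerProductSpace ℂ H] [CompleteSpace H]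
    (P0 : H →L[ℂ] H) (hP0sa : IsSelfAdjoint P0) (hP0idem : P0 * P0 = P0)
    (f0 : H) (hf0 : ‖f0‖ = 1) (hf0fix : P0 f0 = f0) :
    Continuous (Eproj P0 f0) ∧
    (∀ (r : ℝ) (x y : (H →L[ℂ] H) × H),
      Eproj P0 f0 (r • x + y) = r • Eproj P0 f0 x + Eproj P0 f0 y) ∧
    (∀ (X : H →L[ℂ] H) (h : H), IsSelfAdjoint X →
      Eproj P0 f0 (Eproj P0 f0 (X, h)) = Eproj P0 f0 (X, h)) ∧
    {Y : (H →L[ℂ] H) × H | ∃ X : H →L[ℂ] H, ∃ h : H, IsSelfAdjoint X ∧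
        Eproj P0 f0 (X, h) = Y} =
      {Y : (H →L[ℂ] H) × H | ∃ X : H →L[ℂ] H, adjoint X = -X ∧
        Y = (X * P0 - P0 * X, X f0)} ∧
    (∀ X : H →L[ℂ] H, adjoint X = -X →
      Eproj P0 f0 (X * P0 - P0 * X, X f0) = (X * P0 - P0 * X, X f0)) := by
  have hPP : ∀ v, P0 (P0 v) = P0 v := fun v => ContinuousLinearMap.ext_iff.mp hP0idem v
  have hPf0 : ∀ v : H, ⟪f0, P0 v⟫_ℂ = ⟪f0, v⟫_ℂ := fun v => by
    conv_lhs => rw [← hP0sa.adjoint_eq, adjoint_inner_right]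
    rw [hf0fix]
  have hP0sym : ∀ u v : H, ⟪u, P0 v⟫_ℂ = ⟪P0 u, v⟫_ℂ := fun u v => by
    conv_lhs => rw [← hP0sa.adjoint_eq, adjoint_inner_right]
  have hf0f0 : ⟪f0, f0⟫_ℂ = 1 := by
    rw [inner_self_eq_norm_sq_to_K, hf0]; norm_num
  -- Part 5, proved first (used in Part 4).
  have part5 : ∀ X : H →L[ℂ] H, adjoint X = -X →
      Eproj P0 f0 (X * P0 - P0 * X, X f0) = (X * P0 - P0 * X, X f0) := by
    intro X hX
    have hc : ⟪f0, X f0⟫_ℂ = Complex.I * ((⟪f0, X f0⟫_ℂ).im : ℂ) := by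
      have h1 : ⟪f0, X f0⟫_ℂ = -(starRingEnd ℂ) ⟪f0, X f0⟫_ℂ := by
        calc ⟪f0, X f0⟫_ℂ = ⟪adjoint X f0, f0⟫_ℂ := (adjoint_inner_left X f0 f0).symm
          _ = ⟪-(X f0), f0⟫_ℂ := by rw [hX]; rfl
          _ = -⟪X f0, f0⟫_ℂ := by rw [inner_neg_left]
          _ = -(starRingEnd ℂ) ⟪f0, X f0⟫_ℂ := by rw [inner_conj_symm]
      have hre : (⟪f0, X f0⟫_ℂ).re = 0 := by
        have := congrArg Complex.re h1
        simp only [Complex.neg_re, Complex.conj_re] at this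
        linarith
      apply Complex.ext <;> simp [hre]
    unfold Eproj
    refine Prod.ext ?_ ?_
    · ext v
      simp only [mul_apply_eq_comp, add_apply, sub_apply, one_apply_eq_self, map_add, map_sub, hPP]
      abel
    · simp only [sub_apply, mul_apply_eq_comp, hf0fix, hPP, one_apply_eq_self, map_sub, rankOne_apply']
      rw [← hc]
      abel
  refine ⟨?_, ?_, ?_, ?_, part5⟩
  · -- Part 1: continuity
    unfold Eproj
    have h1 : Continuous fun Xh : (H →L[ℂ] H) × H => Xh.1 := continuous_fst
    have h2 : Continuous fun Xh : (H →L[ℂ] H) × H => Xh.2 := continuous_snd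
    have happ : Continuous fun Xh : (H →L[ℂ] H) × H => Xh.1 f0 :=
      (isBoundedBilinearMap_apply.continuous.comp (h1.prodMk continuous_const))
    refine Continuous.prodMk ?_ ?_
    · exact ((continuous_const.mul h1).mul continuous_const).add
        ((continuous_const.mul h1).mul continuous_const)
    · refine Continuous.add (Continuous.add ?_ ((P0 - rankOne f0 f0).continuous.comp h2))
        ((1 - P0).continuous.comp happ)
      refine Continuous.smul ?_ continuous_const
      exact continuous_const.mul
        (Complex.continuous_ofReal.comp (Complex.continuous_im.comp
          ((innerSL ℂ f0).continuous.comp h2)))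
  · -- Part 2: real-linearity
    intro r x y
    unfold Eproj
    refine Prod.ext ?_ ?_
    · simp only [Prod.fst_add, Prod.smul_fst, Prod.snd_add, Prod.smul_snd, smul_add]
      simp only [mul_add, add_mul, smul_mul_assoc, mul_smul_comm]
      abel
    · simp only [Prod.fst_add, Prod.smul_fst, Prod.snd_add, Prod.smul_snd, smul_add]
      have hsm : ∀ v : H, r • v = (r : ℂ) • v := fun v =>
        RCLike.real_smul_eq_coe_smul (K := ℂ) r v
      simp only [hsm, inner_add_right, inner_smul_right, map_add, map_smul, add_apply,
        smul_apply, map_smul]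
      simp only [Complex.add_im, Complex.mul_im, Complex.ofReal_re, Complex.ofReal_im,
        Complex.ofReal_add, Complex.ofReal_mul, zero_mul, add_zero]
      match_scalars <;> ring
  · -- Part 3: idempotency
    intro X h _
    unfold Eproj
    refine Prod.ext ?_ ?_
    · ext v
      simp only [mul_apply_eq_comp, add_apply, sub_apply, one_apply_eq_self, map_add, map_sub, hPP]
      abel
    · simp only
      have hinner : ⟪f0, (Complex.I * ((⟪f0, h⟫_ℂ).im : ℂ)) • f0 + (P0 - rankOne f0 f0) h
          + (1 - P0) (X f0)⟫_ℂ = Complex.I * ((⟪f0, h⟫_ℂ).im : ℂ) := by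
        simp only [inner_add_right, inner_smul_right, sub_apply, rankOne_apply', one_apply_eq_self,
          inner_sub_right, hPf0, hf0f0, inner_smul_right]
        ring
      rw [hinner]
      simp only [Complex.mul_im, Complex.I_re, Complex.I_im, Complex.ofReal_re,
        Complex.ofReal_im, zero_mul, one_mul, mul_zero, add_zero, zero_add]
      congr 1
      · congr 1
        · simp only [sub_apply, rankOne_apply', map_add, map_sub, map_smul, hPP, hf0fix,
            one_apply_eq_self, hinner, inner_add_right, inner_smul_right, inner_sub_right, hPf0,
            hf0f0]
          match_scalars <;> ring
      · simp only [mul_apply_eq_comp, add_apply, sub_apply, one_apply_eq_self, map_add, map_sub, hPP,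
          hf0fix]
        abel
  · -- Part 4: range identification
    ext Y
    simp only [Set.mem_setOf_eq]
    constructor
    · rintro ⟨X, h, hXsa, rfl⟩
      obtain ⟨c, hc_def⟩ : ∃ c : ℂ, c = Complex.I * ((⟪f0, h⟫_ℂ).im : ℂ) := ⟨_, rfl⟩
      obtain ⟨w, hw_def⟩ : ∃ w : H, w = c • f0 + (P0 - rankOne f0 f0) h := ⟨_, rfl⟩
      have hw : ⟪f0, w⟫_ℂ = c := by
        rw [hw_def, hc_def]
        simp only [inner_add_right, inner_sub_right, inner_smul_right, sub_apply,
          rankOne_apply', hPf0, hf0f0]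
        ring
      have hcconj : (starRingEnd ℂ) c = -c := by
        rw [hc_def]
        simp [Complex.ext_iff]
      have hcstar : star c = -c := hcconj
      have hPw : P0 w = w := by
        rw [hw_def]
        simp only [map_add, map_smul, map_sub, sub_apply, rankOne_apply', hf0fix, hPP]
      obtain ⟨A, hA_def⟩ : ∃ A : H →L[ℂ] H, A =
          (1 - P0) * X * P0 - P0 * X * (1 - P0) + (rankOne w f0 - rankOne f0 w)
            - ⟪f0, w⟫_ℂ • rankOne f0 f0 := ⟨_, rfl⟩
      have hstar1 : star P0 = P0 := hP0sa
      have hstarX : star X = X := hXsa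
      refine ⟨A, ?_, ?_⟩
      · rw [← star_eq_adjoint, hA_def]
        simp only [star_sub, star_add, star_mul, star_smul, star_one, hstar1, hstarX]
        rw [star_eq_adjoint, star_eq_adjoint, star_eq_adjoint, adjoint_rankOne',
          adjoint_rankOne', adjoint_rankOne', hw, hcstar]
        simp only [neg_smul, neg_neg]
        noncomm_ring
      · unfold Eproj
        simp only [← hc_def]
        refine Prod.ext ?_ ?_
        · symm
          ext v
          simp only [hA_def, mul_apply_eq_comp, add_apply, sub_apply, one_apply_eq_self, smul_apply,
            map_add, map_sub, map_smul, rankOne_apply', hPP, hPw, hPf0, hw]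
          rw [show ⟪w, P0 v⟫_ℂ = ⟪w, v⟫_ℂ from by rw [hP0sym, hPw]]
          simp only [hf0fix]
          match_scalars <;> ring
        · symm
          simp only [hA_def, sub_apply, add_apply, mul_apply_eq_comp, smul_apply, one_apply_eq_self,
            rankOne_apply', hf0fix, hf0f0, map_sub, map_add, map_smul, hPP, hw]
          rw [show ⟪w, f0⟫_ℂ = -c from by rw [← inner_conj_symm, hw, hcconj]]
          rw [hw_def]
          simp only [map_add, map_smul, map_sub, sub_apply, rankOne_apply', hf0fix, hPP,
            one_smul]
          match_scalars <;> ring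
    · rintro ⟨X, hX, rfl⟩
      refine ⟨X * P0 - P0 * X, X f0, ?_, part5 X hX⟩
      rw [isSelfAdjoint_iff, star_sub, star_mul, star_mul, hP0sa.star_eq,
        star_eq_adjoint, hX]
      noncomm_ring
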